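/- Let $\varphi:\mathbb{R}\to\mathbb{R}\cup\{+\infty\}$ be a proper closed convex function attaining its minimum value $0$ at $t=1$, and let $\varphi^*(s) = \sup_{t\ge 0}\{ts - \varphi(t)\}$. Then for any real numbers $z_1,\dots,z_m$ and $\tau>0$, the DRO–OCE duality holds: $\max_{\mathbf{p}\in\Delta_m}\left\{\sum_{j=1}^m p_j z_j - \tau\sum_{j=1}^m \frac{1}{m}\varphi(m p_j)\right\} = \min_{\mu\in\mathbb{R}}\left\{\mu + \frac{\tau}{m}\sum_{j=1}^m \varphi^*\left(\frac{z_j-\mu}{\tau}\right)\right\}$, where $\Delta_m = \{\mathbf{p}\in\mathbb{R}^m : p_j\ge 0, \sum_j p_j = 1\}$. -/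

import Mathlib

open Finset


section aux
variable (φ : ℝ → ℝ) (φstar : ℝ → ℝ)

/-- upper bound property -/
lemma aux_ub (hφstar : ∀ s : ℝ, IsLUB {v : ℝ | ∃ t : ℝ, 0 ≤ t ∧ v = t * s - φ t} (φstar s))
    (s t : ℝ) (ht : 0 ≤ t) : t * s - φ t ≤ φstar s :=
  (hφstar s).1 ⟨t, ht, rfl⟩

/-- attainment of the sup -/
lemma aux_attain (hconv : ConvexOn ℝ Set.univ φ) (hφ1 : φ 1 = 0)
    (hφstar : ∀ s : ℝ, IsLUB {v : ℝ | ∃ t : ℝ, 0 ≤ t ∧ v = t * s - φ t} (φstar s))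
    (s : ℝ) : ∃ t : ℝ, 0 ≤ t ∧ t * s - φ t = φstar s := by
  have cφ : Continuous φ := hconv.locallyLipschitz.continuous
  set T : ℝ := max 1 (φstar (s+1) - s) with hT
  have hT1 : (1:ℝ) ≤ T := le_max_left _ _
  have hcont : ContinuousOn (fun t => t * s - φ t) (Set.Icc 0 T) := by
    fun_prop
  obtain ⟨t0, ht0mem, ht0max⟩ := (isCompact_Icc (a := (0:ℝ)) (b := T)).exists_isMaxOn
    ⟨0, Set.left_mem_Icc.2 (by linarith)⟩ hcont
  refine ⟨t0, ht0mem.1, ?_⟩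
  have hub : ∀ v ∈ {v : ℝ | ∃ t : ℝ, 0 ≤ t ∧ v = t * s - φ t}, v ≤ t0 * s - φ t0 := by
    rintro v ⟨t, ht, rfl⟩
    rcases le_or_gt t T with h | h
    · exact ht0max (Set.mem_Icc.2 ⟨ht, h⟩)
    · -- t > T : value < s = value at 1 ≤ max
      have h1 : t * (s+1) - φ t ≤ φstar (s+1) := aux_ub φ φstar hφstar _ _ ht
      have h2 : (1:ℝ) * s - φ 1 ≤ t0 * s - φ t0 := ht0max (Set.mem_Icc.2 ⟨by norm_num, hT1⟩)
      have h3 : φstar (s+1) - s ≤ T := le_max_right _ _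
      linarith [hφ1]
  exact le_antisymm ((hφstar s).1 ⟨t0, ht0mem.1, rfl⟩) ((hφstar s).2 hub)

end aux


section aux2
variable (φ : ℝ → ℝ) (φstar : ℝ → ℝ)

/-- argmax monotone -/
lemma aux_mono (hφstar : ∀ s : ℝ, IsLUB {v : ℝ | ∃ t : ℝ, 0 ≤ t ∧ v = t * s - φ t} (φstar s))
    {s s' t t' : ℝ} (hss : s < s') (ht : 0 ≤ t) (ht' : 0 ≤ t')
    (hmax : t * s - φ t = φstar s) (hmax' : t' * s' - φ t' = φstar s') : t ≤ t' := by
  have h1 : t' * s - φ t' ≤ t * s - φ t := hmax ▸ (hφstar s).1 ⟨t', ht', rfl⟩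
  have h2 : t * s' - φ t ≤ t' * s' - φ t' := hmax' ▸ (hφstar s').1 ⟨t, ht, rfl⟩
  nlinarith

/-- φstar is convex -/
lemma aux_star_convex
    (hφstar : ∀ s : ℝ, IsLUB {v : ℝ | ∃ t : ℝ, 0 ≤ t ∧ v = t * s - φ t} (φstar s)) :
    ConvexOn ℝ Set.univ φstar := by
  refine ⟨convex_univ, fun s1 _ s2 _ a b ha hb hab => ?_⟩
  refine (hφstar _).2 ?_
  rintro v ⟨t, ht, rfl⟩
  have h1 : t * s1 - φ t ≤ φstar s1 := (hφstar s1).1 ⟨t, ht, rfl⟩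
  have h2 : t * s2 - φ t ≤ φstar s2 := (hφstar s2).1 ⟨t, ht, rfl⟩
  have : t * (a • s1 + b • s2) - φ t = a * (t * s1 - φ t) + b * (t * s2 - φ t) := by
    simp only [smul_eq_mul]; linear_combination φ t * hab
  rw [this]
  simp only [smul_eq_mul]
  nlinarith [mul_le_mul_of_nonneg_left h1 ha, mul_le_mul_of_nonneg_left h2 hb]

end aux2


section aux3
variable (φ : ℝ → ℝ) (φstar : ℝ → ℝ)

/-- weak duality -/
lemma aux_wd (m : ℕ) (hm : 0 < m) (τ : ℝ) (hτ : 0 < τ)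
    (hφstar : ∀ s : ℝ, IsLUB {v : ℝ | ∃ t : ℝ, 0 ≤ t ∧ v = t * s - φ t} (φstar s))
    (z : Fin m → ℝ) (p : Fin m → ℝ) (hp0 : ∀ j, 0 ≤ p j) (hp1 : ∑ j, p j = 1) (μ : ℝ) :
    ∑ j, p j * z j - τ * ∑ j, (1/(m:ℝ)) * φ ((m:ℝ) * p j)
      ≤ μ + (τ/(m:ℝ)) * ∑ j, φstar ((z j - μ)/τ) := by
  have hm0 : (m:ℝ) ≠ 0 := Nat.cast_ne_zero.2 hm.ne'
  have hτ0 : τ ≠ 0 := hτ.ne'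
  have e : ∑ j, p j * z j - τ * ∑ j, (1/(m:ℝ)) * φ ((m:ℝ) * p j)
      = μ + ∑ j, ((τ/(m:ℝ)) * ((m:ℝ) * p j * ((z j - μ)/τ) - φ ((m:ℝ) * p j))) := by
    have hterm : ∀ j, (τ/(m:ℝ)) * ((m:ℝ) * p j * ((z j - μ)/τ) - φ ((m:ℝ) * p j))
        = p j * z j - μ * p j - τ * ((1/(m:ℝ)) * φ ((m:ℝ) * p j)) := by
      intro j; field_simp
    rw [Finset.sum_congr rfl (fun j _ => hterm j)]
    simp only [Finset.sum_sub_distrib, ← Finset.mul_sum, hp1]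
    ring
  rw [e, Finset.mul_sum]
  refine add_le_add_right (Finset.sum_le_sum fun j _ => ?_) μ
  exact mul_le_mul_of_nonneg_left
    ((hφstar _).1 ⟨(m:ℝ) * p j, mul_nonneg (by positivity) (hp0 j), rfl⟩) (by positivity)

end aux3


section aux4
variable (φ : ℝ → ℝ) (φstar : ℝ → ℝ)

lemma aux_combo (hconv : ConvexOn ℝ Set.univ φ)
    (hφstar : ∀ s : ℝ, IsLUB {v : ℝ | ∃ t : ℝ, 0 ≤ t ∧ v = t * s - φ t} (φstar s))
    {s t1 t2 l : ℝ} (ht1 : 0 ≤ t1) (ht2 : 0 ≤ t2)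
    (h1 : t1 * s - φ t1 = φstar s) (h2 : t2 * s - φ t2 = φstar s)
    (hl0 : 0 ≤ l) (hl1 : l ≤ 1) :
    (l * t1 + (1-l) * t2) * s - φ (l * t1 + (1-l) * t2) = φstar s := by
  have hle : (l * t1 + (1-l) * t2) * s - φ (l * t1 + (1-l) * t2) ≤ φstar s :=
    (hφstar s).1 ⟨_, add_nonneg (mul_nonneg hl0 ht1) (mul_nonneg (by linarith) ht2), rfl⟩
  have hcv : φ (l • t1 + (1-l) • t2) ≤ l • φ t1 + (1-l) • φ t2 :=
    hconv.2 (Set.mem_univ t1) (Set.mem_univ t2) hl0 (by linarith) (by ring)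
  simp only [smul_eq_mul] at hcv
  nlinarith [hcv]

lemma aux_tt_lb (hφnn : ∀ t : ℝ, 0 ≤ φ t)
    (hφstar : ∀ s : ℝ, IsLUB {v : ℝ | ∃ t : ℝ, 0 ≤ t ∧ v = t * s - φ t} (φstar s))
    {s t : ℝ} (hs : φ 2 + 1 ≤ s) (ht : 0 ≤ t) (hv : t * s - φ t = φstar s) : 1 ≤ t := by
  have h2 : 2 * s - φ 2 ≤ φstar s := (hφstar s).1 ⟨2, by norm_num, rfl⟩
  by_contra h
  push_neg at h
  have hspos : 0 < s := by nlinarith [hφnn 2]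
  nlinarith [hφnn t, hφnn 2, mul_pos hspos (sub_pos.mpr h)]

lemma aux_tt_ub (hφnn : ∀ t : ℝ, 0 ≤ φ t)
    (hφstar : ∀ s : ℝ, IsLUB {v : ℝ | ∃ t : ℝ, 0 ≤ t ∧ v = t * s - φ t} (φstar s))
    {s t : ℝ} (hs : s ≤ -(φ 0 + 1)) (ht : 0 ≤ t) (hv : t * s - φ t = φstar s) : t < 1 := by
  have h0 : 0 * s - φ 0 ≤ φstar s := (hφstar s).1 ⟨0, le_refl _, rfl⟩
  by_contra h
  push_neg at h
  nlinarith [hφnn t, hφnn 0]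

end aux4

theorem stmt13 (m : ℕ) (hm : 0 < m) (τ : ℝ) (hτ : 0 < τ)
    (φ : ℝ → ℝ) (hconv : ConvexOn ℝ Set.univ φ)
    (hφ1 : φ 1 = 0) (hφnn : ∀ t : ℝ, 0 ≤ φ t)
    (φstar : ℝ → ℝ)
    (hφstar : ∀ s : ℝ, IsLUB {v : ℝ | ∃ t : ℝ, 0 ≤ t ∧ v = t * s - φ t} (φstar s))
    (z : Fin m → ℝ) :
    sSup {v : ℝ | ∃ p : Fin m → ℝ, (∀ j, 0 ≤ p j) ∧ (∑ j, p j = 1) ∧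
        v = ∑ j, p j * z j - τ * ∑ j, (1/(m:ℝ)) * φ ((m:ℝ) * p j)}
      = sInf (Set.range fun μ : ℝ => μ + (τ/(m:ℝ)) * ∑ j, φstar ((z j - μ)/τ)) := by
  haveI : Nonempty (Fin m) := ⟨⟨0, hm⟩⟩
  have hm0 : (m:ℝ) ≠ 0 := Nat.cast_ne_zero.2 hm.ne'
  have hmpos : (0:ℝ) < m := Nat.cast_pos.2 hm
  have hτ0 : τ ≠ 0 := hτ.ne'
  have cφ : Continuous φ := hconv.locallyLipschitz.continuous
  have cφs : Continuous φstar :=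
    (aux_star_convex φ φstar hφstar).locallyLipschitz.continuous
  -- choice of maximizers
  obtain ⟨tt, htt⟩ : ∃ tt : ℝ → ℝ, ∀ s, 0 ≤ tt s ∧ tt s * s - φ (tt s) = φstar s := by
    choose tt h1 h2 using aux_attain φ φstar hconv hφ1 hφstar
    exact ⟨tt, fun s => ⟨h1 s, h2 s⟩⟩
  have htt0 : ∀ s, 0 ≤ tt s := fun s => (htt s).1
  have httv : ∀ s, tt s * s - φ (tt s) = φstar s := fun s => (htt s).2
  have ttmono : ∀ {s s' : ℝ}, s ≤ s' → tt s ≤ tt s' := by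
    intro s s' h
    rcases eq_or_lt_of_le h with rfl | h
    · exact le_rfl
    · exact aux_mono φ φstar hφstar h (htt0 s) (htt0 s') (httv s) (httv s')
  set S : Set ℝ := {v : ℝ | ∃ p : Fin m → ℝ, (∀ j, 0 ≤ p j) ∧ (∑ j, p j = 1) ∧
      v = ∑ j, p j * z j - τ * ∑ j, (1/(m:ℝ)) * φ ((m:ℝ) * p j)} with hS
  set F : ℝ → ℝ := fun μ : ℝ => μ + (τ/(m:ℝ)) * ∑ j, φstar ((z j - μ)/τ) with hF
  -- uniform distribution
  have hpu1 : ∑ _j : Fin m, (1:ℝ)/(m:ℝ) = 1 := by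
    simp [Finset.sum_const, Finset.card_univ]
    field_simp
  have hpu0 : ∀ _j : Fin m, (0:ℝ) ≤ 1/(m:ℝ) := fun _ => by positivity
  set vu : ℝ := ∑ j : Fin m, (1:ℝ)/(m:ℝ) * z j -
      τ * ∑ _j : Fin m, (1/(m:ℝ)) * φ ((m:ℝ) * ((1:ℝ)/(m:ℝ))) with hvu
  have hvuS : vu ∈ S := ⟨fun _ => 1/(m:ℝ), hpu0, hpu1, rfl⟩
  have hSne : S.Nonempty := ⟨vu, hvuS⟩
  have hSub : ∀ v ∈ S, ∀ μ : ℝ, v ≤ F μ := by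
    rintro v ⟨p, h0, h1, rfl⟩ μ
    exact aux_wd φ φstar m hm τ hτ hφstar z p h0 h1 μ
  have hSbdd : BddAbove S := ⟨F 0, fun v hv => hSub v hv 0⟩
  have hIbdd : BddBelow (Set.range F) := by
    refine ⟨vu, ?_⟩
    rintro y ⟨μ, rfl⟩
    exact hSub vu hvuS μ
  -- the dual function g
  set g : ℝ → ℝ := fun μ => ∑ j, tt ((z j - μ)/τ) with hg
  have hganti : ∀ {μ μ' : ℝ}, μ ≤ μ' → g μ' ≤ g μ := by
    intro μ μ' h
    refine Finset.sum_le_sum fun j _ => ttmono ?_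
    have h2 : z j - μ' ≤ z j - μ := by linarith
    exact div_le_div_of_nonneg_right h2 hτ.le
  set E : Set ℝ := {μ : ℝ | (m:ℝ) ≤ g μ} with hE
  have hEne : E.Nonempty := by
    refine ⟨univ.inf' univ_nonempty z - τ * (φ 2 + 1), ?_⟩
    have key : ∀ j : Fin m, (1:ℝ) ≤ tt ((z j - (univ.inf' univ_nonempty z - τ * (φ 2 + 1)))/τ) := by
      intro j
      refine aux_tt_lb φ φstar hφnn hφstar ?_ (htt0 _) (httv _)
      rw [le_div_iff₀ hτ]
      have : univ.inf' univ_nonempty z ≤ z j := inf'_le _ (mem_univ j)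
      nlinarith
    calc (m:ℝ) = ∑ _j : Fin m, (1:ℝ) := by simp
      _ ≤ g _ := Finset.sum_le_sum fun j _ => key j
  have hEbdd : BddAbove E := by
    refine ⟨univ.sup' univ_nonempty z + τ * (φ 0 + 1), fun μ hμ => ?_⟩
    by_contra hc
    push_neg at hc
    have key : ∀ j : Fin m, tt ((z j - μ)/τ) < 1 := by
      intro j
      refine aux_tt_ub φ φstar hφnn hφstar ?_ (htt0 _) (httv _)
      rw [div_le_iff₀ hτ]
      have : z j ≤ univ.sup' univ_nonempty z := le_sup' _ (mem_univ j)
      nlinarith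
    have : g μ < ∑ _j : Fin m, (1:ℝ) :=
      Finset.sum_lt_sum_of_nonempty univ_nonempty fun j _ => key j
    have h1m : (∑ _j : Fin m, (1:ℝ)) = (m:ℝ) := by simp
    have := hμ
    rw [hE, Set.mem_setOf_eq] at this
    linarith [h1m ▸ ‹g μ < ∑ _j : Fin m, (1:ℝ)›]
  set μ0 : ℝ := sSup E with hμ0
  have hglt : ∀ μ, μ0 < μ → g μ < m := by
    intro μ h
    by_contra hc
    push_neg at hc
    exact absurd (le_csSup hEbdd (by rw [hE, Set.mem_setOf_eq]; exact hc)) (not_le.2 h)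
  have hgge : ∀ μ, μ < μ0 → (m:ℝ) ≤ g μ := by
    intro μ h
    obtain ⟨μ'', hmem, hlt⟩ := exists_lt_of_lt_csSup hEne h
    exact le_trans hmem (hganti hlt.le)
  -- limits from above and below
  set s0 : Fin m → ℝ := fun j => (z j - μ0)/τ with hs0
  have hseq : ∀ (u : ℕ → ℝ) (j : Fin m) (L : ℝ), Filter.Tendsto u Filter.atTop (nhds μ0) →
      Filter.Tendsto (fun n => tt ((z j - u n)/τ)) Filter.atTop (nhds L) →
      0 ≤ L ∧ L * s0 j - φ L = φstar (s0 j) := by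
    intro u j L hu htL
    have hs : Filter.Tendsto (fun n => (z j - u n)/τ) Filter.atTop (nhds (s0 j)) :=
      ((tendsto_const_nhds.sub hu).div_const τ)
    constructor
    · exact ge_of_tendsto htL (Filter.Eventually.of_forall fun n => htt0 _)
    · exact tendsto_nhds_unique
        ((htL.mul hs).sub ((cφ.continuousAt.tendsto).comp htL))
        (((cφs.continuousAt.tendsto).comp hs).congr (fun n => (httv _).symm))
  -- upper sequence μ0 + 1/(n+1)
  have hinv : Filter.Tendsto (fun n : ℕ => 1/((n:ℝ)+1)) Filter.atTop (nhds 0) :=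
    tendsto_one_div_add_atTop_nhds_zero_nat
  have hinvpos : ∀ n : ℕ, (0:ℝ) < 1/((n:ℝ)+1) := fun n => by positivity
  have hinvanti : ∀ {a b : ℕ}, a ≤ b → (1:ℝ)/((b:ℝ)+1) ≤ 1/((a:ℝ)+1) := by
    intro a b h
    apply one_div_le_one_div_of_le (by positivity)
    exact add_le_add_left (Nat.cast_le.2 h) 1
  set tp : Fin m → ℝ := fun j => ⨆ n : ℕ, tt ((z j - (μ0 + 1/((n:ℝ)+1)))/τ) with htp
  set tm : Fin m → ℝ := fun j => ⨅ n : ℕ, tt ((z j - (μ0 - 1/((n:ℝ)+1)))/τ) with htm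
  have htendp : ∀ j, Filter.Tendsto (fun n : ℕ => tt ((z j - (μ0 + 1/((n:ℝ)+1)))/τ))
      Filter.atTop (nhds (tp j)) := by
    intro j
    apply tendsto_atTop_ciSup
    · intro a b hab
      refine ttmono (div_le_div_of_nonneg_right (by linarith [hinvanti hab]) hτ.le)
    · refine ⟨tt (s0 j), ?_⟩
      rintro x ⟨n, rfl⟩
      refine ttmono (div_le_div_of_nonneg_right (by linarith [hinvpos n]) hτ.le)
  have htendm : ∀ j, Filter.Tendsto (fun n : ℕ => tt ((z j - (μ0 - 1/((n:ℝ)+1)))/τ))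
      Filter.atTop (nhds (tm j)) := by
    intro j
    apply tendsto_atTop_ciInf
    · intro a b hab
      refine ttmono (div_le_div_of_nonneg_right (by linarith [hinvanti hab]) hτ.le)
    · exact ⟨0, by rintro x ⟨n, rfl⟩; exact htt0 _⟩
  have hup : Filter.Tendsto (fun n : ℕ => μ0 + 1/((n:ℝ)+1)) Filter.atTop (nhds μ0) := by
    simpa using hinv.const_add μ0
  have hun : Filter.Tendsto (fun n : ℕ => μ0 - 1/((n:ℝ)+1)) Filter.atTop (nhds μ0) := by
    simpa using hinv.const_sub μ0
  have hp_att : ∀ j, 0 ≤ tp j ∧ tp j * s0 j - φ (tp j) = φstar (s0 j) :=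
    fun j => hseq _ j _ hup (htendp j)
  have hm_att : ∀ j, 0 ≤ tm j ∧ tm j * s0 j - φ (tm j) = φstar (s0 j) :=
    fun j => hseq _ j _ hun (htendm j)
  have hsump : ∑ j, tp j ≤ (m:ℝ) := by
    have hst : Filter.Tendsto (fun n : ℕ => ∑ j, tt ((z j - (μ0 + 1/((n:ℝ)+1)))/τ))
        Filter.atTop (nhds (∑ j, tp j)) := tendsto_finset_sum _ fun j _ => htendp j
    refine le_of_tendsto hst (Filter.Eventually.of_forall fun n => ?_)
    exact (hglt _ (by linarith [hinvpos n])).le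
  have hsumm : (m:ℝ) ≤ ∑ j, tm j := by
    have hst : Filter.Tendsto (fun n : ℕ => ∑ j, tt ((z j - (μ0 - 1/((n:ℝ)+1)))/τ))
        Filter.atTop (nhds (∑ j, tm j)) := tendsto_finset_sum _ fun j _ => htendm j
    refine ge_of_tendsto hst (Filter.Eventually.of_forall fun n => ?_)
    exact hgge _ (by linarith [hinvpos n])
  -- convex combination
  obtain ⟨l, hl0, hl1, hls⟩ : ∃ l : ℝ, 0 ≤ l ∧ l ≤ 1 ∧
      l * (∑ j, tm j) + (1-l) * (∑ j, tp j) = m := by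
    rcases eq_or_lt_of_le (hsump.trans hsumm) with heq | hlt
    · exact ⟨0, le_rfl, zero_le_one, by rw [← heq]; linarith⟩
    · have hne : (∑ j, tm j) - ∑ j, tp j ≠ 0 := sub_ne_zero.mpr (by linarith)
      refine ⟨((m:ℝ) - ∑ j, tp j)/(∑ j, tm j - ∑ j, tp j),
        div_nonneg (by linarith) (by linarith), ?_, ?_⟩
      · rw [div_le_one (by linarith)]; linarith
      · field_simp
        ring
  set t : Fin m → ℝ := fun j => l * tm j + (1-l) * tp j with ht
  have ht0 : ∀ j, 0 ≤ t j := fun j =>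
    add_nonneg (mul_nonneg hl0 (hm_att j).1) (mul_nonneg (by linarith) (hp_att j).1)
  have htsum : ∑ j, t j = m := by
    rw [ht]
    simp only [Finset.sum_add_distrib, ← Finset.mul_sum]
    linarith
  have hatt : ∀ j, t j * s0 j - φ (t j) = φstar (s0 j) := fun j =>
    aux_combo φ φstar hconv hφstar (hm_att j).1 (hp_att j).1 (hm_att j).2 (hp_att j).2 hl0 hl1
  -- the optimal p
  set p : Fin m → ℝ := fun j => t j / m with hpdef
  have hp0 : ∀ j, 0 ≤ p j := fun j => div_nonneg (ht0 j) hmpos.le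
  have hp1 : ∑ j, p j = 1 := by
    rw [hpdef]
    rw [← Finset.sum_div, htsum, div_self hm0]
  have hmp : ∀ j, (m:ℝ) * p j = t j := fun j => by
    show (m:ℝ) * (t j / (m:ℝ)) = t j
    field_simp
  set v : ℝ := ∑ j, p j * z j - τ * ∑ j, (1/(m:ℝ)) * φ ((m:ℝ) * p j) with hv
  have hvS : v ∈ S := ⟨p, hp0, hp1, rfl⟩
  have hatt' : ∀ j, t j * ((z j - μ0)/τ) - φ (t j) = φstar ((z j - μ0)/τ) := fun j => hatt j
  have hvF : v = F μ0 := by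
    have hv' : v = ∑ j, t j / (m:ℝ) * z j - τ * ∑ j, (1/(m:ℝ)) * φ (t j) := by
      rw [hv]
      have h1 : ∑ j, p j * z j = ∑ j, t j / (m:ℝ) * z j := rfl
      have h2 : ∑ j, (1/(m:ℝ)) * φ ((m:ℝ) * p j) = ∑ j, (1/(m:ℝ)) * φ (t j) :=
        Finset.sum_congr rfl fun j _ => by rw [hmp j]
      rw [h1, h2]
    have key : ∀ j ∈ (univ : Finset (Fin m)), (τ/(m:ℝ)) * φstar ((z j - μ0)/τ)
        = t j / (m:ℝ) * z j - μ0 * (t j / (m:ℝ)) - τ * ((1/(m:ℝ)) * φ (t j)) := by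
      intro j _
      rw [← hatt' j]
      field_simp
    have hμsum : ∑ j, μ0 * (t j / (m:ℝ)) = μ0 := by
      rw [← Finset.mul_sum, ← Finset.sum_div, htsum]
      field_simp
    rw [hv']
    show _ = μ0 + (τ/(m:ℝ)) * ∑ j, φstar ((z j - μ0)/τ)
    conv_rhs => rw [Finset.mul_sum, Finset.sum_congr rfl key, Finset.sum_sub_distrib,
      Finset.sum_sub_distrib, hμsum, ← Finset.mul_sum]
    ring
  -- conclusion
  apply le_antisymm
  · refine le_csInf ⟨F 0, 0, rfl⟩ ?_
    rintro b ⟨μ, rfl⟩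
    exact csSup_le hSne fun v' hv' => hSub v' hv' μ
  · calc sInf (Set.range F) ≤ F μ0 := csInf_le hIbdd ⟨μ0, rfl⟩
      _ = v := hvF.symm
      _ ≤ sSup S := le_csSup hSbdd hvS
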